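/- Proposition 6 (maximal inequality in moment rearrangement invariant form). Let 1 ≤ a < b ≤ ∞, let θ ∈ (0,1), let T be a countable set, and let Y(t) ∈ L^p(μ) for all t ∈ T and all p ∈ (a,b). Suppose that for each p ∈ (a,b) there are a nondecreasing sequence (F_k^{(p)})_{k≥0} of finite subsets of T with ⋃_k F_k^{(p)} = T, F_0^{(p)} = {t_0^{(p)}}, card(F_k^{(p)}) = N_k(p), such that F_k^{(p)} is a θ^k-net of T for the pseudometric d_p(t,s) = ‖Y(t) − Y(s)‖_{L^p(μ)}. Define h(p) = ‖sup_{t∈T} Y(t)‖_{L^p(μ)} and g(p) = ‖Y(t_0^{(p)})‖_{L^p(μ)} + Σ_{k=1}^∞ θ^{k−1} (N_k(p))^{1/p} for p ∈ (a,b). Then for every functional 𝒩 defined on functions from (a,b) to [0,∞] that is monotone (g₁ ≤ g₂ pointwise implies 𝒩(g₁) ≤ 𝒩(g₂)), one has 𝒩(h) ≤ 𝒩(g). -/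

import Mathlib

open MeasureTheory ENNReal Set

noncomputable section

/-- The set of exponents p with a < p and p < b (b may be infinite). -/
def expSet (a : ℝ) (b : ℝ≥0∞) : Set ℝ := {p : ℝ | a < p ∧ ENNReal.ofReal p < b}

/-- The class Ψ(a,b). -/
structure IsPsi (a : ℝ) (b : ℝ≥0∞) (ψ : ℝ → ℝ) : Prop where
  one_le : ∀ p ∈ expSet a b, 1 ≤ ψ p
  bddOnCompacts : ∀ c d : ℝ, c ∈ expSet a b → d ∈ expSet a b → BddAbove (ψ '' Set.Icc c d)
  logConvex : ConvexOn ℝ (expSet a b) fun p => Real.log (ψ p)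

/-- L^p norm (real exponent). -/
def lpNorm {X : Type*} [MeasurableSpace X] (μ : Measure X) (f : X → ℝ) (p : ℝ) : ℝ≥0∞ :=
  (∫⁻ x, ENNReal.ofReal (|f x| ^ p) ∂μ) ^ (1 / p)

/-- Bilateral Grand Lebesgue norm. -/
def glNorm {X : Type*} [MeasurableSpace X] (μ : Measure X) (a : ℝ) (b : ℝ≥0∞) (ψ : ℝ → ℝ)
    (f : X → ℝ) : ℝ≥0∞ :=
  ⨆ p ∈ expSet a b, lpNorm μ f p / ENNReal.ofReal (ψ p)

/-- L^p norm for extended-real-valued functions. -/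
def lpNormE {X : Type*} [MeasurableSpace X] (μ : Measure X) (g : X → EReal) (p : ℝ) : ℝ≥0∞ :=
  (∫⁻ x, (g x).abs ^ p ∂μ) ^ (1 / p)

/-- Bilateral Grand Lebesgue norm for extended-real-valued functions. -/
def glNormE {X : Type*} [MeasurableSpace X] (μ : Measure X) (a : ℝ) (b : ℝ≥0∞) (ψ : ℝ → ℝ)
    (g : X → EReal) : ℝ≥0∞ :=
  ⨆ p ∈ expSet a b, lpNormE μ g p / ENNReal.ofReal (ψ p)

/-- L^p norm for `ℝ≥0∞`-valued functions. -/
def lpNormNN {X : Type*} [MeasurableSpace X] (μ : Measure X) (g : X → ℝ≥0∞) (p : ℝ) : ℝ≥0∞ :=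
  (∫⁻ x, g x ^ p ∂μ) ^ (1 / p)

end

lemma ereal_abs_le' {x : EReal} {R : ℝ≥0∞} (h1 : -x ≤ (R : EReal)) (h2 : x ≤ (R : EReal)) :
    x.abs ≤ R := by
  rcases eq_or_ne R ⊤ with rfl | hR
  · exact le_top
  induction x with
  | bot =>
      exfalso
      rw [show -(⊥:EReal) = ⊤ from rfl, top_le_iff, EReal.coe_ennreal_eq_top_iff] at h1
      exact hR h1
  | coe r =>
      have hcoe : (R : EReal) = ((R.toReal : ℝ) : EReal) := by
        rw [← ENNReal.ofReal_toReal hR, EReal.coe_ennreal_ofReal,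
          max_eq_left ENNReal.toReal_nonneg, ENNReal.ofReal_toReal hR]
      rw [hcoe] at h1 h2
      rw [← EReal.coe_neg] at h1
      have h1' : -r ≤ R.toReal := EReal.coe_le_coe_iff.1 h1
      have h2' : r ≤ R.toReal := EReal.coe_le_coe_iff.1 h2
      have habs : |r| ≤ R.toReal := abs_le.2 ⟨by linarith, h2'⟩
      calc (↑(r:ℝ) : EReal).abs = ENNReal.ofReal |r| := EReal.abs_def r
      _ ≤ ENNReal.ofReal R.toReal := ENNReal.ofReal_le_ofReal habs
      _ = R := ENNReal.ofReal_toReal hR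
  | top =>
      exfalso
      rw [top_le_iff, EReal.coe_ennreal_eq_top_iff] at h2
      exact hR h2

lemma abs_iSup_bound' {T : Type*} (f : T → ℝ) (t0 : T) :
    (⨆ t, (f t : EReal)).abs ≤ ENNReal.ofReal |f t0| + ⨆ t, ENNReal.ofReal |f t - f t0| := by
  set R : ℝ≥0∞ := ENNReal.ofReal |f t0| + ⨆ t, ENNReal.ofReal |f t - f t0| with hR
  have hcoeabs : ((ENNReal.ofReal |f t0| : ℝ≥0∞) : EReal) = ((|f t0| : ℝ) : EReal) := by
    rw [EReal.coe_ennreal_ofReal, max_eq_left (abs_nonneg _)]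
  have key2 : (⨆ t, (f t : EReal)) ≤ (R : EReal) := by
    apply iSup_le
    intro t
    have hreal : f t ≤ |f t0| + |f t - f t0| := by
      calc f t = f t0 + (f t - f t0) := by ring
      _ ≤ |f t0| + |f t - f t0| := add_le_add (le_abs_self _) (le_abs_self _)
    calc ((f t : ℝ) : EReal) ≤ ((|f t0| + |f t - f t0| : ℝ) : EReal) :=
          EReal.coe_le_coe_iff.2 hreal
    _ = ((|f t0| : ℝ) : EReal) + ((|f t - f t0| : ℝ) : EReal) := EReal.coe_add _ _
    _ ≤ ((ENNReal.ofReal |f t0| : ℝ≥0∞) : EReal)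
          + ((⨆ t', ENNReal.ofReal |f t' - f t0| : ℝ≥0∞) : EReal) := by
        apply add_le_add
        · rw [hcoeabs]
        · calc ((|f t - f t0| : ℝ) : EReal)
              = ((ENNReal.ofReal |f t - f t0| : ℝ≥0∞) : EReal) := by
                rw [EReal.coe_ennreal_ofReal, max_eq_left (abs_nonneg _)]
          _ ≤ _ := EReal.coe_ennreal_le_coe_ennreal_iff.2
                (le_iSup (fun t' => ENNReal.ofReal |f t' - f t0|) t)
    _ = (R : EReal) := (EReal.coe_ennreal_add _ _).symm
  have key1 : -(⨆ t, (f t : EReal)) ≤ (R : EReal) := by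
    calc -(⨆ t, (f t : EReal)) ≤ -((f t0 : ℝ) : EReal) :=
          EReal.neg_le_neg_iff.2 (le_iSup (fun t => ((f t : ℝ) : EReal)) t0)
    _ = ((-f t0 : ℝ) : EReal) := (EReal.coe_neg _).symm
    _ ≤ ((|f t0| : ℝ) : EReal) := EReal.coe_le_coe_iff.2 (neg_le_abs _)
    _ = ((ENNReal.ofReal |f t0| : ℝ≥0∞) : EReal) := hcoeabs.symm
    _ ≤ (R : EReal) := EReal.coe_ennreal_le_coe_ennreal_iff.2 le_self_add
  exact ereal_abs_le' key1 key2

lemma ennreal_rpow_iSup' {ι : Sort*} (f : ι → ℝ≥0∞) {p : ℝ} (hp : 0 < p) :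
    (⨆ i, f i) ^ p = ⨆ i, f i ^ p := by
  have h := (ENNReal.orderIsoRpow p hp).map_iSup f
  simp only [ENNReal.orderIsoRpow_apply] at h
  exact h

/-- Proposition 6 (maximal inequality in moment rearrangement invariant form). -/
theorem entropy_bound_mri
    {X : Type*} [MeasurableSpace X] (μ : Measure X) [SigmaFinite μ]
    (a : ℝ) (b : ℝ≥0∞) (ha : 1 ≤ a) (hab : ENNReal.ofReal a < b)
    (θ : ℝ) (hθ0 : 0 < θ) (hθ1 : θ < 1)
    (T : Type*) [Countable T]
    (Y : T → X → ℝ) (hYmeas : ∀ t, Measurable (Y t))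
    (hLp : ∀ t, ∀ p ∈ expSet a b, lpNorm μ (Y t) p < ⊤)
    (F : ℝ → ℕ → Finset T) (t₀ : ℝ → T)
    (hFmono : ∀ p ∈ expSet a b, Monotone (F p))
    (hcover : ∀ p ∈ expSet a b, ∀ t : T, ∃ k, t ∈ F p k)
    (hF0 : ∀ p ∈ expSet a b, F p 0 = {t₀ p})
    (hnet : ∀ p ∈ expSet a b, ∀ k : ℕ, ∀ t : T, ∃ s ∈ F p k,
      lpNorm μ (fun x => Y t x - Y s x) p ≤ ENNReal.ofReal (θ ^ k))
    (N : (ℝ → ℝ≥0∞) → ℝ≥0∞)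
    (hNmono : ∀ g₁ g₂ : ℝ → ℝ≥0∞, (∀ p ∈ expSet a b, g₁ p ≤ g₂ p) → N g₁ ≤ N g₂) :
    N (fun p => lpNormE μ (fun x => ⨆ t, (Y t x : EReal)) p) ≤
      N (fun p => lpNorm μ (Y (t₀ p)) p +
        ∑' k : ℕ, ENNReal.ofReal (θ ^ k) * ((F p (k + 1)).card : ℝ≥0∞) ^ (1 / p)) := by
  apply hNmono
  intro p hp
  have hp1 : 1 ≤ p := le_trans ha hp.1.le
  have hp0 : (0:ℝ) < p := lt_of_lt_of_le one_pos hp1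
  have hpne : p ≠ 0 := hp0.ne'
  have hip : (0:ℝ) ≤ 1 / p := by positivity
  set t0 : T := t₀ p with ht0
  set G : T → X → ℝ≥0∞ := fun t x => ENNReal.ofReal |Y t x - Y t0 x| with hGdef
  have hGmeas : ∀ t, Measurable (G t) := fun t =>
    (((hYmeas t).sub (hYmeas t0)).abs).ennreal_ofReal
  set A : X → ℝ≥0∞ := fun x => ENNReal.ofReal |Y t0 x| with hAdef
  have hAmeas : Measurable A := ((hYmeas t0).abs).ennreal_ofReal
  set B : X → ℝ≥0∞ := fun x => ⨆ t, G t x with hBdef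
  have hBmeas : Measurable B := Measurable.iSup hGmeas
  -- (x^p)^(1/p) and ((x)^(1/p))^p
  have hrp1 : ∀ x : ℝ≥0∞, (x ^ p) ^ (1/p) = x := by
    intro x; rw [← ENNReal.rpow_mul, mul_one_div_cancel hpne, ENNReal.rpow_one]
  have hrp2 : ∀ x : ℝ≥0∞, (x ^ (1/p)) ^ p = x := by
    intro x; rw [← ENNReal.rpow_mul, one_div_mul_cancel hpne, ENNReal.rpow_one]
  -- conversion between lpNorm and lpNormNN
  have hconv : ∀ g : X → ℝ,
      lpNorm μ g p = lpNormNN μ (fun x => ENNReal.ofReal |g x|) p := by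
    intro g
    unfold _root_.lpNorm lpNormNN
    congr 1
    refine lintegral_congr fun x => ?_
    rw [ENNReal.ofReal_rpow_of_nonneg (abs_nonneg _) hp0.le]
  -- the chaining bound
  set C : ℝ≥0∞ := ∑' k : ℕ, ENNReal.ofReal (θ ^ k) * ((F p (k + 1)).card : ℝ≥0∞) ^ (1 / p)
    with hCdef
  set Bk : ℕ → X → ℝ≥0∞ := fun k x => ⨆ t ∈ F p k, G t x with hBkdef
  have hBkmeas : ∀ k, Measurable (Bk k) := fun k =>
    Measurable.iSup fun t => Measurable.iSup fun _ => hGmeas t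
  obtain ⟨π, hπmem, hπlp⟩ :
      ∃ π : ℕ → T → T, (∀ k t, π k t ∈ F p k) ∧
        (∀ k t, lpNorm μ (fun x => Y t x - Y (π k t) x) p ≤ ENNReal.ofReal (θ ^ k)) := by
    have h := hnet p hp
    choose π h1 h2 using fun k t => h k t
    exact ⟨π, h1, h2⟩
  -- single-step bound on the increments
  have hBk_le : ∀ k, lpNormNN μ (Bk k) p ≤
      ∑ j ∈ Finset.range k, ENNReal.ofReal (θ ^ j) * ((F p (j + 1)).card : ℝ≥0∞) ^ (1 / p) := by
    intro k
    induction k with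
    | zero =>
        have h0 : ∀ x, Bk 0 x = 0 := by
          intro x
          rw [hBkdef]
          simp only [hF0 p hp, Finset.mem_singleton]
          refine le_antisymm (iSup_le fun t => iSup_le fun ht => ?_) (zero_le)
          subst ht
          simp [hGdef, ht0]
        unfold lpNormNN
        simp only [h0, ENNReal.zero_rpow_of_pos hp0, lintegral_zero]
        rw [ENNReal.zero_rpow_of_pos (by positivity)]
        simp
    | succ k ih =>
        set D : X → ℝ≥0∞ := fun x => ⨆ t ∈ F p (k+1), ENNReal.ofReal |Y t x - Y (π k t) x|
          with hDdef
        have hDmeas : Measurable D := Measurable.iSup fun t => Measurable.iSup fun _ =>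
          (((hYmeas t).sub (hYmeas (π k t))).abs).ennreal_ofReal
        have hpt : ∀ x, Bk (k+1) x ≤ Bk k x + D x := by
          intro x
          refine iSup₂_le fun t ht => ?_
          calc G t x = ENNReal.ofReal |Y t x - Y t0 x| := rfl
          _ ≤ ENNReal.ofReal (|Y (π k t) x - Y t0 x| + |Y t x - Y (π k t) x|) := by
              refine ENNReal.ofReal_le_ofReal ?_
              calc |Y t x - Y t0 x| ≤ |Y t x - Y (π k t) x| + |Y (π k t) x - Y t0 x| :=
                    abs_sub_le _ _ _
              _ = |Y (π k t) x - Y t0 x| + |Y t x - Y (π k t) x| := by ring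
          _ ≤ ENNReal.ofReal |Y (π k t) x - Y t0 x| + ENNReal.ofReal |Y t x - Y (π k t) x| :=
              ENNReal.ofReal_add_le
          _ ≤ Bk k x + D x := by
              refine add_le_add ?_ ?_
              · exact le_iSup₂ (f := fun t' (_ : t' ∈ F p k) => G t' x) (π k t) (hπmem k t)
              · exact le_iSup₂ (f := fun t' (_ : t' ∈ F p (k+1)) =>
                  ENNReal.ofReal |Y t' x - Y (π k t') x|) t ht
        -- bound on the increment D
        have hD : lpNormNN μ D p ≤
            ENNReal.ofReal (θ ^ k) * ((F p (k + 1)).card : ℝ≥0∞) ^ (1 / p) := by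
          have hptD : ∀ x, D x ^ p ≤
              ∑ t ∈ F p (k+1), (ENNReal.ofReal |Y t x - Y (π k t) x|) ^ p := by
            intro x
            have hle : D x ≤
                (∑ t ∈ F p (k+1), (ENNReal.ofReal |Y t x - Y (π k t) x|) ^ p) ^ (1/p) := by
              refine iSup₂_le fun t ht => ?_
              calc ENNReal.ofReal |Y t x - Y (π k t) x|
                  = ((ENNReal.ofReal |Y t x - Y (π k t) x|) ^ p) ^ (1/p) := (hrp1 _).symm
              _ ≤ _ := ENNReal.rpow_le_rpow
                    (Finset.single_le_sum
                      (f := fun t' => (ENNReal.ofReal |Y t' x - Y (π k t') x|) ^ p)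
                      (fun _ _ => zero_le) ht) hip
            calc D x ^ p ≤
                ((∑ t ∈ F p (k+1), (ENNReal.ofReal |Y t x - Y (π k t) x|) ^ p) ^ (1/p)) ^ p :=
                  ENNReal.rpow_le_rpow hle hp0.le
            _ = _ := hrp2 _
          have hm : ∀ t : T, Measurable fun x => ENNReal.ofReal |Y t x - Y (π k t) x| ^ p :=
            fun t => (ENNReal.continuous_rpow_const.measurable).comp
              ((((hYmeas t).sub (hYmeas (π k t))).abs).ennreal_ofReal)
          have hint : ∀ t, (∫⁻ x, (ENNReal.ofReal |Y t x - Y (π k t) x|) ^ p ∂μ) ≤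
              (ENNReal.ofReal (θ ^ k)) ^ p := by
            intro t
            have e1 : (∫⁻ x, (ENNReal.ofReal |Y t x - Y (π k t) x|) ^ p ∂μ) =
                (lpNorm μ (fun x => Y t x - Y (π k t) x) p) ^ p := by
              rw [hconv]
              unfold lpNormNN
              rw [hrp2]
            rw [e1]
            exact ENNReal.rpow_le_rpow (hπlp k t) hp0.le
          calc lpNormNN μ D p
              = (∫⁻ x, D x ^ p ∂μ) ^ (1/p) := rfl
          _ ≤ (∫⁻ x, ∑ t ∈ F p (k+1), (ENNReal.ofReal |Y t x - Y (π k t) x|) ^ p ∂μ) ^ (1/p) :=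
              ENNReal.rpow_le_rpow (lintegral_mono hptD) hip
          _ = (∑ t ∈ F p (k+1), ∫⁻ x, (ENNReal.ofReal |Y t x - Y (π k t) x|) ^ p ∂μ) ^ (1/p) := by
              rw [lintegral_finset_sum _ fun t _ => hm t]
          _ ≤ (∑ _t ∈ F p (k+1), (ENNReal.ofReal (θ ^ k)) ^ p) ^ (1/p) :=
              ENNReal.rpow_le_rpow (Finset.sum_le_sum fun t _ => hint t) hip
          _ = (((F p (k+1)).card : ℝ≥0∞) * (ENNReal.ofReal (θ ^ k)) ^ p) ^ (1/p) := by
              rw [Finset.sum_const, nsmul_eq_mul]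
          _ = ((F p (k+1)).card : ℝ≥0∞) ^ (1/p) * ENNReal.ofReal (θ ^ k) := by
              rw [ENNReal.mul_rpow_of_nonneg _ _ hip, hrp1]
          _ = ENNReal.ofReal (θ ^ k) * ((F p (k+1)).card : ℝ≥0∞) ^ (1/p) := mul_comm _ _
        -- Minkowski
        calc lpNormNN μ (Bk (k+1)) p
            ≤ lpNormNN μ (fun x => Bk k x + D x) p := by
              unfold lpNormNN
              exact ENNReal.rpow_le_rpow
                (lintegral_mono fun x => ENNReal.rpow_le_rpow (hpt x) hp0.le) hip
        _ ≤ lpNormNN μ (Bk k) p + lpNormNN μ D p :=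
            ENNReal.lintegral_Lp_add_le (hBkmeas k).aemeasurable hDmeas.aemeasurable hp1
        _ ≤ (∑ j ∈ Finset.range k, ENNReal.ofReal (θ ^ j) * ((F p (j + 1)).card : ℝ≥0∞) ^ (1 / p))
              + ENNReal.ofReal (θ ^ k) * ((F p (k + 1)).card : ℝ≥0∞) ^ (1 / p) :=
            add_le_add ih hD
        _ = ∑ j ∈ Finset.range (k+1),
              ENNReal.ofReal (θ ^ j) * ((F p (j + 1)).card : ℝ≥0∞) ^ (1 / p) :=
            (Finset.sum_range_succ _ _).symm
  -- pass to the limit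
  have hBbound : lpNormNN μ B p ≤ C := by
    have hBsup : ∀ x, B x = ⨆ k, Bk k x := by
      intro x
      refine le_antisymm (iSup_le fun t => ?_) (iSup_le fun k => iSup₂_le fun t _ =>
        le_iSup (fun t' => G t' x) t)
      obtain ⟨k, hk⟩ := hcover p hp t
      exact le_trans (le_iSup₂ (f := fun t' (_ : t' ∈ F p k) => G t' x) t hk)
        (le_iSup (fun k' => Bk k' x) k)
    have hmono : Monotone fun k => fun x => Bk k x ^ p := by
      intro k l hkl
      intro x
      refine ENNReal.rpow_le_rpow ?_ hp0.le
      exact iSup₂_le fun t ht => le_iSup₂ (f := fun t' (_ : t' ∈ F p l) => G t' x) t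
        (hFmono p hp hkl ht)
    have hint : (∫⁻ x, B x ^ p ∂μ) = ⨆ k, ∫⁻ x, Bk k x ^ p ∂μ := by
      calc (∫⁻ x, B x ^ p ∂μ) = ∫⁻ x, ⨆ k, Bk k x ^ p ∂μ := by
            refine lintegral_congr fun x => ?_
            rw [hBsup x, ennreal_rpow_iSup' _ hp0]
      _ = ⨆ k, ∫⁻ x, Bk k x ^ p ∂μ :=
            lintegral_iSup (fun k =>
              (show Measurable fun x => Bk k x ^ p from
                (ENNReal.continuous_rpow_const.measurable).comp (hBkmeas k))) hmono
    have hC : ∀ k, (∫⁻ x, Bk k x ^ p ∂μ) ≤ C ^ p := by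
      intro k
      have e : (∫⁻ x, Bk k x ^ p ∂μ) = (lpNormNN μ (Bk k) p) ^ p := by
        unfold lpNormNN; rw [hrp2]
      rw [e]
      refine ENNReal.rpow_le_rpow (le_trans (hBk_le k) ?_) hp0.le
      exact ENNReal.sum_le_tsum _
    calc lpNormNN μ B p = (∫⁻ x, B x ^ p ∂μ) ^ (1/p) := rfl
    _ ≤ (C ^ p) ^ (1/p) := by
        refine ENNReal.rpow_le_rpow ?_ hip
        rw [hint]
        exact iSup_le hC
    _ = C := hrp1 _
  -- assemble
  have habs : ∀ x, (⨆ t, (Y t x : EReal)).abs ≤ A x + B x := fun x =>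
    abs_iSup_bound' (fun t => Y t x) t0
  calc lpNormE μ (fun x => ⨆ t, (Y t x : EReal)) p
      ≤ lpNormNN μ (fun x => A x + B x) p := by
        unfold lpNormE lpNormNN
        exact ENNReal.rpow_le_rpow
          (lintegral_mono fun x => ENNReal.rpow_le_rpow (habs x) hp0.le) hip
  _ ≤ lpNormNN μ A p + lpNormNN μ B p :=
      ENNReal.lintegral_Lp_add_le hAmeas.aemeasurable hBmeas.aemeasurable hp1
  _ ≤ lpNorm μ (Y t0) p + C := by
      rw [hconv (Y t0)]
      exact add_le_add le_rfl hBbound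
  _ = lpNorm μ (Y (t₀ p)) p +
        ∑' k : ℕ, ENNReal.ofReal (θ ^ k) * ((F p (k + 1)).card : ℝ≥0∞) ^ (1 / p) := rfl
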